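/- For all positive real numbers a and b with a ≠ b, ((a+b)/2 − √(ab))/(b − a) = (1/2)·(√b − √a)/(√b + √a), and consequently |((a+b)/2 − √(ab))/(b − a)| ≤ (1/4)·|log b − log a|. -/

import Mathlib

lemma aux_log_ineq {x y : ℝ} (hx : 0 < x) (hxy : x < y) :
    (y - x) / (y + x) ≤ Real.log y - Real.log x := by
  have hy : 0 < y := hx.trans hxy
  have h1 : Real.log (x / y) ≤ x / y - 1 := Real.log_le_sub_one_of_pos (by positivity)
  rw [Real.log_div hx.ne' hy.ne'] at h1
  have h2 : (y - x) / y = 1 - x / y := by field_simp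
  have h3 : (y - x) / (y + x) ≤ (y - x) / y := by
    gcongr
    · linarith
  linarith [h3, h2 ▸ h3]

/-- For distinct positive reals, `((a+b)/2 − √(ab))/(b−a) = (1/2)(√b−√a)/(√b+√a)`, and
consequently `|((a+b)/2 − √(ab))/(b−a)| ≤ (1/4)|log b − log a|`. -/
theorem arith_sub_geom_ratio (a b : ℝ) (ha : 0 < a) (hb : 0 < b) (hab : a ≠ b) :
    ((a + b) / 2 - Real.sqrt (a * b)) / (b - a)
        = (1 / 2) * (Real.sqrt b - Real.sqrt a) / (Real.sqrt b + Real.sqrt a) ∧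
    |((a + b) / 2 - Real.sqrt (a * b)) / (b - a)| ≤ (1 / 4) * |Real.log b - Real.log a| := by
  set x := Real.sqrt a with hxdef
  set y := Real.sqrt b with hydef
  have hx : 0 < x := Real.sqrt_pos.mpr ha
  have hy : 0 < y := Real.sqrt_pos.mpr hb
  have hxa : x ^ 2 = a := Real.sq_sqrt ha.le
  have hyb : y ^ 2 = b := Real.sq_sqrt hb.le
  have hxy : x ≠ y := by
    intro h; apply hab; rw [← hxa, ← hyb, h]
  have hab' : Real.sqrt (a * b) = x * y := Real.sqrt_mul ha.le b
  have hsum : (0:ℝ) < y + x := by linarith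
  have hdiff : b - a = (y - x) * (y + x) := by rw [← hxa, ← hyb]; ring
  have hba : b - a ≠ 0 := by
    intro h; apply hab; linarith [sub_eq_zero.mp h]
  have heq : ((a + b) / 2 - Real.sqrt (a * b)) / (b - a)
      = (1 / 2) * (y - x) / (y + x) := by
    rw [hab', ← hxa, ← hyb]
    have hne : y - x ≠ 0 := sub_ne_zero.mpr (Ne.symm hxy)
    rw [show y ^ 2 - x ^ 2 = (y - x) * (y + x) from by ring]
    field_simp
    ring
  refine ⟨heq, ?_⟩
  rw [heq]
  have hlog : Real.log b - Real.log a = 2 * (Real.log y - Real.log x) := by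
    rw [← hxa, ← hyb, Real.log_pow, Real.log_pow]; push_cast; ring
  rw [hlog]
  have key : |y - x| / (y + x) ≤ |Real.log y - Real.log x| := by
    rcases lt_or_gt_of_ne hxy with h | h
    · rw [abs_of_pos (by linarith : (0:ℝ) < y - x),
        abs_of_pos (by simpa using Real.log_lt_log hx h : (0:ℝ) < Real.log y - Real.log x)]
      exact aux_log_ineq hx h
    · rw [abs_of_neg (by linarith : y - x < 0),
        abs_of_neg (by simpa using Real.log_lt_log hy h : Real.log y - Real.log x < 0)]
      have := aux_log_ineq hy h
      have hsum2 : x + y = y + x := by ring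
      calc -(y - x) / (y + x) = (x - y) / (x + y) := by rw [hsum2]; ring_nf
        _ ≤ Real.log x - Real.log y := aux_log_ineq hy h
        _ = -(Real.log y - Real.log x) := by ring
  rw [abs_div, abs_mul, abs_of_pos hsum, abs_of_pos (by norm_num : (0:ℝ) < 1/2)]
  calc 1 / 2 * |y - x| / (y + x) = (1/2) * (|y - x| / (y + x)) := by ring
    _ ≤ (1/2) * |Real.log y - Real.log x| := by
        apply mul_le_mul_of_nonneg_left key; norm_num
    _ = 1 / 4 * |2 * (Real.log y - Real.log x)| := by
        rw [abs_mul, abs_two]; ring
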